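/- If A ⊆ 2^{<ω₁} is an antichain and for some fixed countable ordinal ξ₀ the set A_{ξ₀} = A ∩ 2^{ξ₀} is ≤_lex-cofinal in A, then A is countably cofinal under ≤_lex: there is an at most countable A' ⊆ A that is ≤_lex-cofinal in A. -/

import Mathlib

open Cardinal Ordinal

/-- A transfinite binary sequence of countable length: an element of `2^{<ω₁}`. -/
structure BSeq where
  len : Ordinal.{0}
  len_countable : len.card ≤ Cardinal.aleph0
  val : ∀ η : Ordinal.{0}, η < len → Bool

/-- `t` properly extends `s`, i.e. `s` is a proper initial segment of `t`. -/
def BSeq.ExtendedBy (s t : BSeq) : Prop :=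
  ∃ h : s.len < t.len, ∀ η (hη : η < s.len), s.val η hη = t.val η (hη.trans h)

/-- The lexicographic order on `2^{<ω₁}`: `s ≤lex t` iff `s = t`, or neither is a proper
initial segment of the other and at the least point of disagreement `s` has value
`false` and `t` has value `true`. -/
def BSeq.lexLE (s t : BSeq) : Prop :=
  s = t ∨ (¬ s.ExtendedBy t ∧ ¬ t.ExtendedBy s ∧
    ∃ η, ∃ hs : η < s.len, ∃ ht : η < t.len,
      (∀ ζ (hζs : ζ < s.len) (hζt : ζ < t.len), ζ < η → s.val ζ hζs = t.val ζ hζt) ∧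
      s.val η hs = false ∧ t.val η ht = true)

/-- The strict lexicographic order on `2^{<ω₁}`. -/
def BSeq.lexLT (s t : BSeq) : Prop := s.lexLE t ∧ s ≠ t

/-- An antichain in `2^{<ω₁}`: no element is a proper initial segment of another. -/
def IsSeqAntichain (A : Set BSeq) : Prop :=
  ∀ s ∈ A, ∀ t ∈ A, ¬ s.ExtendedBy t

/-- Extensionality for `BSeq`. -/
theorem BSeq.ext' {s t : BSeq} (hlen : s.len = t.len)
    (hval : ∀ η (hs : η < s.len) (ht : η < t.len), s.val η hs = t.val η ht) : s = t := by
  cases s with | mk l c v =>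
  cases t with | mk l' c' v' =>
  simp only at hlen
  subst hlen
  simp only [BSeq.mk.injEq, heq_eq_eq, true_and]
  funext η h
  exact hval η h h

theorem BSeq.not_extendedBy_of_ne {a c : BSeq} (η : Ordinal) (ha : η < a.len) (hc : η < c.len)
    (h : a.val η ha ≠ c.val η hc) : ¬ a.ExtendedBy c := by
  rintro ⟨hl, hv⟩
  exact h (hv η ha)

/-- Transitivity of the lexicographic order. -/
theorem BSeq.lexLE_trans {a b c : BSeq} (hab : a.lexLE b) (hbc : b.lexLE c) : a.lexLE c := by
  rcases hab with rfl | ⟨hne1, hne2, η₁, ha1, hb1, hagr1, ha0, hb1v⟩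
  · exact hbc
  rcases hbc with rfl | ⟨hne3, hne4, η₂, hb2, hc2, hagr2, hb0, hc1v⟩
  · exact Or.inr ⟨hne1, hne2, η₁, ha1, hb1, hagr1, ha0, hb1v⟩
  have hη : η₁ ≠ η₂ := by
    rintro rfl
    have h1 : b.val η₁ hb2 = true := hb1v
    rw [hb0] at h1
    exact Bool.false_ne_true h1
  rcases lt_or_gt_of_ne hη with hlt | hlt
  · -- η₁ < η₂ : disagreement of a and c at η₁
    have hcη : η₁ < c.len := hlt.trans hc2
    have hcval : c.val η₁ hcη = true := by
      rw [← hagr2 η₁ hb1 hcη hlt]; exact hb1v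
    have hne : a.val η₁ ha1 ≠ c.val η₁ hcη := by rw [ha0, hcval]; simp
    refine Or.inr ⟨BSeq.not_extendedBy_of_ne η₁ ha1 hcη hne,
      BSeq.not_extendedBy_of_ne η₁ hcη ha1 (Ne.symm hne), η₁, ha1, hcη, ?_, ha0, hcval⟩
    intro ζ hζa hζc hζ
    have hζb : ζ < b.len := hζ.trans hb1
    rw [hagr1 ζ hζa hζb hζ, hagr2 ζ hζb hζc (hζ.trans hlt)]
  · -- η₂ < η₁ : disagreement of a and c at η₂
    have haη : η₂ < a.len := hlt.trans ha1
    have haval : a.val η₂ haη = false := by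
      rw [hagr1 η₂ haη hb2 hlt]; exact hb0
    have hne : a.val η₂ haη ≠ c.val η₂ hc2 := by rw [haval, hc1v]; simp
    refine Or.inr ⟨BSeq.not_extendedBy_of_ne η₂ haη hc2 hne,
      BSeq.not_extendedBy_of_ne η₂ hc2 haη (Ne.symm hne), η₂, haη, hc2, ?_, haval, hc1v⟩
    intro ζ hζa hζc hζ
    have hζb : ζ < b.len := hζ.trans hb2
    rw [hagr1 ζ hζa hζb (hζ.trans hlt), hagr2 ζ hζb hζc hζ]

open Classical in
/-- The "rightmost branch" through a set of sequences. -/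
noncomputable def ubranch (B : Set BSeq) : Ordinal.{0} → Bool :=
  Ordinal.lt_wf.fix fun η ih =>
    if ∃ t ∈ B, ∃ h : η < t.len,
        (∀ ζ (hζ : ζ < η), t.val ζ (hζ.trans h) = ih ζ hζ) ∧ t.val η h = true
    then true else false

open Classical in
theorem ubranch_eq (B : Set BSeq) (η : Ordinal.{0}) :
    ubranch B η = if ∃ t ∈ B, ∃ h : η < t.len,
        (∀ ζ (hζ : ζ < η), t.val ζ (hζ.trans h) = ubranch B ζ) ∧ t.val η h = true
      then true else false := by
  rw [ubranch, WellFounded.fix_eq]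

theorem ubranch_true_iff (B : Set BSeq) (η : Ordinal.{0}) :
    ubranch B η = true ↔ ∃ t ∈ B, ∃ h : η < t.len,
        (∀ ζ (hζ : ζ < η), t.val ζ (hζ.trans h) = ubranch B ζ) ∧ t.val η h = true := by
  classical
  rw [ubranch_eq]
  by_cases h : ∃ t ∈ B, ∃ h : η < t.len,
        (∀ ζ (hζ : ζ < η), t.val ζ (hζ.trans h) = ubranch B ζ) ∧ t.val η h = true
  · rw [if_pos h]
    exact iff_of_true rfl h
  · rw [if_neg h]
    exact iff_of_false (by simp) h

/-- If `A ⊆ 2^{<ω₁}` is an antichain and, for some fixed countable ordinal `ξ₀`,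
`A ∩ 2^{ξ₀}` is `≤lex`-cofinal in `A`, then `A` is countably cofinal under `≤lex`. -/
theorem antichain_countably_cofinal_of_level_cofinal (A : Set BSeq) (hA : IsSeqAntichain A)
    (ξ₀ : Ordinal) (hξ₀ : ξ₀.card ≤ aleph0)
    (hcof : ∀ t ∈ A, ∃ s ∈ A, s.len = ξ₀ ∧ t.lexLE s) :
    ∃ A' ⊆ A, A'.Countable ∧ ∀ t ∈ A, ∃ s ∈ A', t.lexLE s := by
  classical
  set B : Set BSeq := {x ∈ A | x.len = ξ₀} with hB
  set useq : BSeq := ⟨ξ₀, hξ₀, fun η _ => ubranch B η⟩ with huseq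
  set w : Ordinal → BSeq := fun η =>
    if h : ∃ t ∈ B, ∃ hl : η < t.len,
        (∀ ζ (hζ : ζ < η), t.val ζ (hζ.trans hl) = ubranch B ζ) ∧ t.val η hl = true
    then h.choose else useq with hw
  refine ⟨(insert useq (w '' Set.Iio ξ₀)) ∩ A, Set.inter_subset_right, ?_, ?_⟩
  · refine Set.Countable.mono Set.inter_subset_left ?_
    refine Set.Countable.insert _ (Set.Countable.image ?_ _)
    rw [← Cardinal.le_aleph0_iff_set_countable, Ordinal.mk_Iio_ordinal,
      Cardinal.lift_le_aleph0]
    exact hξ₀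
  · intro t ht
    obtain ⟨s, hsA, hslen, hts⟩ := hcof t ht
    have hsB : s ∈ B := ⟨hsA, hslen⟩
    by_cases hall : ∀ η (h : η < s.len), s.val η h = ubranch B η
    · -- s equals the branch
      have hsu : s = useq := by
        refine BSeq.ext' (by rw [hslen]) ?_
        intro η hs hu
        exact hall η hs
      refine ⟨s, ⟨?_, hsA⟩, hts⟩
      rw [hsu]
      exact Set.mem_insert _ _
    · push_neg at hall
      set D : Set Ordinal := {η | ∃ h : η < s.len, s.val η h ≠ ubranch B η} with hD
      have hDne : D.Nonempty := by
        obtain ⟨η, h, hne⟩ := hall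
        exact ⟨η, h, hne⟩
      set η := Ordinal.lt_wf.min D hDne with hη
      obtain ⟨hηs, hηne⟩ : η ∈ D := Ordinal.lt_wf.min_mem D hDne
      have hbelow : ∀ ζ (hζ : ζ < η) (hζs : ζ < s.len), s.val ζ hζs = ubranch B ζ := by
        intro ζ hζ hζs
        by_contra hne
        exact Ordinal.lt_wf.not_lt_min D (x := ζ) ⟨hζs, hne⟩ hζ
      have hsval : s.val η hηs = false := by
        by_contra hne
        have hstrue : s.val η hηs = true := by
          cases h : s.val η hηs
          · exact absurd h hne
          · rfl
        have : ubranch B η = true := by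
          rw [ubranch_true_iff]
          exact ⟨s, hsB, hηs, fun ζ hζ => hbelow ζ hζ (hζ.trans hηs), hstrue⟩
        rw [this] at hηne
        exact hηne hstrue
      have hub : ubranch B η = true := by
        cases h : ubranch B η
        · rw [h, hsval] at hηne; exact absurd rfl hηne
        · rfl
      have hP := (ubranch_true_iff B η).mp hub
      have hwη : w η = hP.choose := dif_pos hP
      obtain ⟨hrB, hl, hagr, hrval⟩ := hP.choose_spec
      set r := hP.choose with hr
      have hrlen : r.len = ξ₀ := hrB.2
      have hηξ : η < ξ₀ := hslen ▸ hηs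
      have hsr : s.lexLE r := by
        refine Or.inr ⟨?_, ?_, η, hηs, hl, ?_, hsval, hrval⟩
        · rintro ⟨hll, -⟩
          rw [hslen, hrlen] at hll
          exact lt_irrefl _ hll
        · rintro ⟨hll, -⟩
          rw [hslen, hrlen] at hll
          exact lt_irrefl _ hll
        · intro ζ hζs hζr hζ
          rw [hbelow ζ hζ hζs, hagr ζ hζ]
      refine ⟨r, ⟨?_, hrB.1⟩, BSeq.lexLE_trans hts hsr⟩
      refine Set.mem_insert_of_mem _ ?_
      exact ⟨η, hηξ, hwη⟩
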